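/- Assume that the vectors {q_i − q_j : (i,j) ∈ D} span EuclideanSpace ℝ (Fin p). Then the following are equivalent: (i) there exists b ∈ EuclideanSpace ℝ (Fin p) with every coordinate of b in [−1,1], with ⟪b, q_i − q_j⟫ ≥ 0 for all (i,j) ∈ D, and with Σ_{(i,j)∈D} a_{ij}·⟪b, q_i − q_j⟫ > 0 (i.e., the optimal value of the linear program is strictly positive); (ii) there exists a nonzero b ∈ EuclideanSpace ℝ (Fin p) with ⟪b, q_i − q_j⟫ ≥ 0 for all (i,j) ∈ D. -/

import Mathlib

open Finset

/-- Equivalence between a strictly positive optimal value of the linear program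
`max ∑_{(i,j)∈D} a_{ij} ⟪b, q i - q j⟫ s.t. b ∈ [-1,1]^p, ⟪b, q i - q j⟫ ≥ 0 on D`
and the existence of a nonzero feasible direction, under the assumption that the
difference vectors `{q i - q j : (i,j) ∈ D}` span the whole space. -/
theorem lp_positive_iff_nonzero_feasible (n p : ℕ) (hn : 1 ≤ n) (hp : 1 ≤ p)
    (q : Fin n → EuclideanSpace ℝ (Fin p))
    (D : Finset (Fin n × Fin n)) (hD : ∀ pr ∈ D, pr.1 ≠ pr.2)
    (a : Fin n × Fin n → ℝ) (ha : ∀ pr ∈ D, 0 < a pr)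
    (hspan : Submodule.span ℝ
      {v : EuclideanSpace ℝ (Fin p) | ∃ pr ∈ D, v = q pr.1 - q pr.2} = ⊤) :
    (∃ b : EuclideanSpace ℝ (Fin p),
        (∀ k : Fin p, b k ∈ Set.Icc (-1 : ℝ) 1) ∧
        (∀ pr ∈ D, 0 ≤ (inner ℝ b (q pr.1 - q pr.2) : ℝ)) ∧
        0 < ∑ pr ∈ D, a pr * (inner ℝ b (q pr.1 - q pr.2) : ℝ)) ↔
    (∃ b : EuclideanSpace ℝ (Fin p), b ≠ 0 ∧
        ∀ pr ∈ D, 0 ≤ (inner ℝ b (q pr.1 - q pr.2) : ℝ)) := by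
  constructor
  · rintro ⟨b, _, hfeas, hpos⟩
    refine ⟨b, ?_, hfeas⟩
    rintro rfl
    simp at hpos
  · rintro ⟨b, hb, hfeas⟩
    -- some inner product must be strictly positive
    have hex : ∃ pr ∈ D, 0 < (inner ℝ b (q pr.1 - q pr.2) : ℝ) := by
      by_contra h
      push_neg at h
      have hzero : ∀ pr ∈ D, (inner ℝ b (q pr.1 - q pr.2) : ℝ) = 0 := fun pr hpr =>
        le_antisymm (h pr hpr) (hfeas pr hpr)
      apply hb
      have hbv : ∀ v : EuclideanSpace ℝ (Fin p), (inner ℝ b v : ℝ) = 0 := by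
        intro v
        have hv : v ∈ Submodule.span ℝ
            {v : EuclideanSpace ℝ (Fin p) | ∃ pr ∈ D, v = q pr.1 - q pr.2} := by
          rw [hspan]; trivial
        induction hv using Submodule.span_induction with
        | mem x hx =>
          obtain ⟨pr, hpr, rfl⟩ := hx
          exact hzero pr hpr
        | zero => simp
        | add x y _ _ hx hy => rw [inner_add_right, hx, hy, add_zero]
        | smul c x _ hx => rw [inner_smul_right, hx, mul_zero]
      have := hbv b
      exact inner_self_eq_zero.mp this
    obtain ⟨pr₀, hpr₀, hpos₀⟩ := hex
    have hnb : (0 : ℝ) < ‖b‖ := norm_pos_iff.mpr hb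
    refine ⟨‖b‖⁻¹ • b, ?_, ?_, ?_⟩
    · intro k
      have hk : |b k| ≤ ‖b‖ := by
        rw [EuclideanSpace.norm_eq]
        rw [← Real.sqrt_sq_eq_abs (b k)]
        apply Real.sqrt_le_sqrt
        calc b k ^ 2 = ‖b k‖ ^ 2 := by rw [Real.norm_eq_abs, sq_abs]
          _ ≤ ∑ i, ‖b i‖ ^ 2 :=
            Finset.single_le_sum (f := fun i => ‖b i‖ ^ 2) (fun i _ => by positivity) (mem_univ k)
      have : |(‖b‖⁻¹ • b) k| ≤ 1 := by
        have : (‖b‖⁻¹ • b) k = ‖b‖⁻¹ * b k := rfl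
        rw [this, abs_mul, abs_inv, abs_norm]
        calc ‖b‖⁻¹ * |b k| ≤ ‖b‖⁻¹ * ‖b‖ := by
              apply mul_le_mul_of_nonneg_left hk (by positivity)
          _ = 1 := inv_mul_cancel₀ (ne_of_gt hnb)
      exact abs_le.mp this
    · intro pr hpr
      rw [real_inner_smul_left]
      have := hfeas pr hpr
      positivity
    · have hterm : ∀ pr ∈ D, 0 ≤ a pr * (inner ℝ (‖b‖⁻¹ • b) (q pr.1 - q pr.2) : ℝ) := by
        intro pr hpr
        rw [real_inner_smul_left]
        have := hfeas pr hpr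
        have := (ha pr hpr).le
        positivity
      apply Finset.sum_pos' hterm
      refine ⟨pr₀, hpr₀, ?_⟩
      rw [real_inner_smul_left]
      have := ha pr₀ hpr₀
      positivity
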